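/- Let λ_1, λ_2 ∈ ℤ_{≥0}. With Δ(λ_1,λ_2) the set of lattice points (a,b,c) ∈ ℤ³ satisfying 0 ≤ a ≤ λ_2, λ_2 ≤ c ≤ λ_1+λ_2, 0 ≤ b ≤ c−a, the set Δ(λ_1,λ_2) equals the Minkowski sum (in ℤ³) of λ_1 copies of Δ(1,0) and λ_2 copies of Δ(0,1). -/
import Mathlib


open Pointwise

private def Sd (l1 l2 : ℕ) : Set (ℤ × ℤ × ℤ) :=
  {p | 0 ≤ p.1 ∧ p.1 ≤ (l2 : ℤ) ∧ (l2 : ℤ) ≤ p.2.2 ∧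
        p.2.2 ≤ (l1 : ℤ) + (l2 : ℤ) ∧ 0 ≤ p.2.1 ∧ p.2.1 ≤ p.2.2 - p.1}

private def Ad : Set (ℤ × ℤ × ℤ) :=
  {p | p.1 = 0 ∧ 0 ≤ p.2.1 ∧ p.2.1 ≤ p.2.2 ∧ p.2.2 ≤ 1}

private def Bd : Set (ℤ × ℤ × ℤ) :=
  {p | 0 ≤ p.1 ∧ 0 ≤ p.2.1 ∧ p.1 + p.2.1 ≤ 1 ∧ p.2.2 = 1}

private lemma stepA (l1 l2 : ℕ) : Sd (l1 + 1) l2 = Sd l1 l2 + Ad := by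
  ext ⟨a, b, c⟩
  simp only [Sd, Ad, Set.mem_setOf_eq, Set.mem_add, Prod.exists, Prod.mk_add_mk,
    Prod.mk.injEq, Nat.cast_add, Nat.cast_one]
  constructor
  · rintro ⟨h1, h2, h3, h4, h5, h6⟩
    by_cases hc : c ≤ (l1 : ℤ) + l2
    · exact ⟨a, b, c, ⟨h1, h2, h3, hc, h5, h6⟩, 0, 0, 0,
        ⟨rfl, le_refl 0, le_refl 0, by norm_num⟩, by ring, by ring, by ring⟩
    · by_cases hb : b ≤ c - 1 - a
      · exact ⟨a, b, c - 1, ⟨h1, h2, by omega, by omega, h5, by omega⟩, 0, 0, 1,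
          ⟨rfl, by norm_num, by norm_num, le_refl 1⟩, by ring, by ring, by ring⟩
      · exact ⟨a, b - 1, c - 1, ⟨h1, h2, by omega, by omega, by omega, by omega⟩, 0, 1, 1,
          ⟨rfl, by norm_num, le_refl 1, le_refl 1⟩, by ring, by ring, by ring⟩
  · rintro ⟨x1, x2, x3, ⟨h1, h2, h3, h4, h5, h6⟩, y1, y2, y3, ⟨g1, g2, g3, g4⟩, e1, e2, e3⟩
    subst g1
    constructor <;> [skip; constructor] <;> omega

private lemma stepB (l1 l2 : ℕ) : Sd l1 (l2 + 1) = Sd l1 l2 + Bd := by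
  ext ⟨a, b, c⟩
  simp only [Sd, Bd, Set.mem_setOf_eq, Set.mem_add, Prod.exists, Prod.mk_add_mk,
    Prod.mk.injEq, Nat.cast_add, Nat.cast_one]
  constructor
  · rintro ⟨h1, h2, h3, h4, h5, h6⟩
    by_cases ha : a ≤ (l2 : ℤ)
    · by_cases hb : b ≤ c - 1 - a
      · exact ⟨a, b, c - 1, ⟨h1, ha, by omega, by omega, h5, by omega⟩, 0, 0, 1,
          ⟨le_refl 0, le_refl 0, by norm_num, rfl⟩, by ring, by ring, by ring⟩
      · exact ⟨a, b - 1, c - 1, ⟨h1, ha, by omega, by omega, by omega, by omega⟩, 0, 1, 1,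
          ⟨le_refl 0, by norm_num, by norm_num, rfl⟩, by ring, by ring, by ring⟩
    · exact ⟨a - 1, b, c - 1, ⟨by omega, by omega, by omega, by omega, h5, by omega⟩, 1, 0, 1,
        ⟨by norm_num, le_refl 0, by norm_num, rfl⟩, by ring, by ring, by ring⟩
  · rintro ⟨x1, x2, x3, ⟨h1, h2, h3, h4, h5, h6⟩, y1, y2, y3, ⟨g1, g2, g3, g4⟩, e1, e2, e3⟩
    constructor <;> [skip; constructor] <;> omega

private lemma main (l1 l2 : ℕ) :
    Sd l1 l2 = (∑ _i ∈ Finset.range l1, Ad) + (∑ _i ∈ Finset.range l2, Bd) := by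
  induction l1 with
  | zero =>
    induction l2 with
    | zero =>
      simp only [Finset.range_zero, Finset.sum_empty, add_zero]
      ext ⟨a, b, c⟩
      simp only [Sd, Set.mem_setOf_eq, Nat.cast_zero, Set.mem_zero, Prod.mk.injEq,
        Prod.mk_eq_zero]
      constructor
      · rintro ⟨h1, h2, h3, h4, h5, h6⟩; refine ⟨by omega, by omega, by omega⟩
      · rintro ⟨rfl, rfl, rfl⟩; norm_num
    | succ l2 ih =>
      rw [stepB, ih, Finset.sum_range_succ, add_assoc]
  | succ l1 ih =>
    rw [stepA, ih, Finset.sum_range_succ, add_right_comm]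

/-- Lattice-point Minkowski decomposition of the marked chain-order polytope of type `A₂`:
the set of lattice points of `Δ(λ₁,λ₂)` is the Minkowski sum (in `ℤ³`) of `λ₁` copies of the
lattice points of `Δ(1,0)` and `λ₂` copies of the lattice points of `Δ(0,1)`. -/
theorem stmt10 (l1 l2 : ℕ) :
    {p : ℤ × ℤ × ℤ | 0 ≤ p.1 ∧ p.1 ≤ (l2 : ℤ) ∧ (l2 : ℤ) ≤ p.2.2 ∧
        p.2.2 ≤ (l1 : ℤ) + (l2 : ℤ) ∧ 0 ≤ p.2.1 ∧ p.2.1 ≤ p.2.2 - p.1}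
      = (∑ _i ∈ Finset.range l1,
          {p : ℤ × ℤ × ℤ | p.1 = 0 ∧ 0 ≤ p.2.1 ∧ p.2.1 ≤ p.2.2 ∧ p.2.2 ≤ 1})
        + (∑ _i ∈ Finset.range l2,
          {p : ℤ × ℤ × ℤ | 0 ≤ p.1 ∧ 0 ≤ p.2.1 ∧ p.1 + p.2.1 ≤ 1 ∧ p.2.2 = 1}) := by
  exact main l1 l2
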